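/- arXiv:2110.15335 — 4 statements merged into one kernel-verified Lean document; each statement's English description precedes it below -/
import Mathlib

section
/- Let (Ω, P) be a probability space, Θ and Y standard Borel spaces, and let θ : Ω → Θ and Y : Ω → Y be measurable. Let μ be the law of θ, ν the law of Y, and π : Y → P(Θ) a regular conditional distribution of θ given Y. Then for every probability measure ξ on Θ, as an identity in [0, ∞]: ∫_Y D_KL( π(y) ‖ ξ ) dν(y) = ∫_Y D_KL( π(y) ‖ μ ) dν(y) + D_KL( μ ‖ ξ ). (The one-experiment decomposition step used recursively in the proof of the equivalence of terminal and incremental information-gain formulations: the expected KL divergence from a fixed reference to the posterior equals the expected information gain plus the KL divergence from the reference to the prior.) -/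
open MeasureTheory ProbabilityTheory ENNReal
open scoped Classical

/-- Kullback–Leibler divergence `D_KL(P‖Q) = ∫ log (dP/dQ) dP ∈ [0,∞]`,
equal to `∞` when `P` is not absolutely continuous w.r.t. `Q` (or when the
log-likelihood ratio is not integrable). -/
noncomputable def klDiv {α : Type*} [MeasurableSpace α] (P Q : Measure α) : ℝ≥0∞ :=
  if P ≪ Q ∧ Integrable (llr P Q) P then ENNReal.ofReal (∫ a, llr P Q a ∂P) else ⊤

namespace KLAux

/-- `φ x = x log x - x + 1`. -/
noncomputable def phi (x : ℝ) : ℝ := x * Real.log x - x + 1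

lemma phi_nonneg {x : ℝ} (hx : 0 ≤ x) : 0 ≤ phi x := by
  rcases eq_or_lt_of_le hx with h | h
  · simp [phi, ← h]
  · have h1 : Real.log x⁻¹ ≤ x⁻¹ - 1 := Real.log_le_sub_one_of_pos (by positivity)
    rw [Real.log_inv] at h1
    have h2 : 1 - x⁻¹ ≤ Real.log x := by linarith
    have h3 : x * (1 - x⁻¹) ≤ x * Real.log x := mul_le_mul_of_nonneg_left h2 h.le
    have h4 : x * (1 - x⁻¹) = x - 1 := by field_simp
    simp only [phi]; nlinarith

lemma measurable_phi : Measurable phi := by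
  unfold phi
  exact ((measurable_id.mul Real.measurable_log).sub measurable_id).add measurable_const

lemma phi_zero : phi 0 = 1 := by simp [phi]

lemma phi_mul {h c : ℝ} (hh : 0 ≤ h) (hc : 0 < c) :
    phi (h * c) = c * phi h + (h * (c * Real.log c) + (1 - c)) := by
  rcases eq_or_lt_of_le hh with h0 | h0
  · simp [← h0, phi]
  · have : Real.log (h * c) = Real.log h + Real.log c := Real.log_mul (ne_of_gt h0) (ne_of_gt hc)
    simp only [phi, this]; ring

end KLAux

open KLAux

/-- `klDiv` of probability measures as a lintegral of a nonnegative integrand. -/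
lemma klDiv_eq_lintegral {α : Type*} [MeasurableSpace α] (p q : Measure α)
    [IsProbabilityMeasure p] [IsProbabilityMeasure q] (hpq : p ≪ q) :
    klDiv p q = ∫⁻ x, ENNReal.ofReal (phi ((p.rnDeriv q x).toReal)) ∂q := by
  set f : α → ℝ := fun x => (p.rnDeriv q x).toReal with hf_def
  have hf_meas : Measurable f := (Measure.measurable_rnDeriv p q).ennreal_toReal
  have hf_nn : ∀ x, 0 ≤ f x := fun x => ENNReal.toReal_nonneg
  have hphi_meas : Measurable fun x => phi (f x) := measurable_phi.comp hf_meas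
  have hphi_nn : ∀ x, 0 ≤ phi (f x) := fun x => phi_nonneg (hf_nn x)
  have hf_int : Integrable f q := Measure.integrable_toReal_rnDeriv
  have hf_integral : ∫ x, f x ∂q = 1 := by
    rw [hf_def, Measure.integral_toReal_rnDeriv hpq]; simp
  -- the key pointwise identity
  have hkey : ∀ x, f x * Real.log (f x) = phi (f x) + (f x - 1) := by
    intro x; simp only [phi]; ring
  -- integrability transfer
  have hiff : Integrable (llr p q) p ↔ Integrable (fun x => phi (f x)) q := by
    rw [← integrable_rnDeriv_smul_iff hpq]
    have : (fun x => (p.rnDeriv q x).toReal • llr p q x)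
        = fun x => phi (f x) + (f x - 1) := by
      funext x
      simp only [smul_eq_mul, llr, hf_def, ← hkey]
      exact hkey x
    rw [this]
    constructor
    · intro h
      have h2 := h.sub (hf_int.sub (integrable_const 1))
      refine h2.congr (Filter.Eventually.of_forall fun x => ?_)
      simp
    · intro h
      exact h.add (hf_int.sub (integrable_const 1))
  have hphi_lint : Integrable (fun x => phi (f x)) q ↔
      ∫⁻ x, ENNReal.ofReal (phi (f x)) ∂q ≠ ⊤ := by
    constructor
    · intro h
      rw [← ofReal_integral_eq_lintegral_ofReal h (.of_forall hphi_nn)]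
      exact ENNReal.ofReal_ne_top
    · intro h
      refine ⟨hphi_meas.aestronglyMeasurable, ?_⟩
      rw [hasFiniteIntegral_iff_ofReal (.of_forall hphi_nn)]
      exact lt_top_iff_ne_top.mpr h
  by_cases hint : Integrable (llr p q) p
  · rw [klDiv, if_pos ⟨hpq, hint⟩]
    have h1 : ∫ a, llr p q a ∂p = ∫ x, phi (f x) ∂q := by
      rw [← integral_rnDeriv_smul hpq (f := llr p q)]
      have : (fun x => (p.rnDeriv q x).toReal • llr p q x)
          = fun x => phi (f x) + (f x - 1) := by
        funext x; simp only [smul_eq_mul, llr, hf_def, ← hkey]; exact hkey x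
      have hsub : Integrable (fun x => f x - 1) q := hf_int.sub (integrable_const 1)
      rw [this, integral_add (hiff.mp hint) hsub, integral_sub hf_int (integrable_const 1),
        hf_integral]
      simp
    rw [h1, ofReal_integral_eq_lintegral_ofReal (hiff.mp hint) (.of_forall hphi_nn)]
  · rw [klDiv, if_neg (fun h => hint h.2)]
    have : ¬ Integrable (fun x => phi (f x)) q := fun h => hint (hiff.mpr h)
    rw [hphi_lint] at this
    simpa using (not_not.mp this).symm

/-- Key scalar decomposition identity in `ℝ≥0∞`. -/
lemma star_lemma {𝒴 : Type*} [MeasurableSpace 𝒴] (ν : Measure 𝒴) [IsProbabilityMeasure ν]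
    (h : 𝒴 → ℝ) (hmeas : Measurable h) (hnn : ∀ y, 0 ≤ h y) (c : ℝ) (hc : 0 ≤ c)
    (hint : c ≠ 0 → ∫⁻ y, ENNReal.ofReal (h y) ∂ν = 1) :
    ∫⁻ y, ENNReal.ofReal (phi (h y * c)) ∂ν
      = ∫⁻ y, ENNReal.ofReal (c * phi (h y)) ∂ν + ENNReal.ofReal (phi c) := by
  rcases eq_or_lt_of_le hc with hc0 | hc0
  · simp [← hc0, phi_zero, lintegral_const]
  have hint1 := hint (ne_of_gt hc0)
  have hmul : ∀ y, phi (h y * c) = c * phi (h y) + (h y * (c * Real.log c) + (1 - c)) :=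
    fun y => phi_mul (hnn y) hc0
  have hA_meas : Measurable fun y => ENNReal.ofReal (phi (h y * c)) :=
    (measurable_phi.comp (hmeas.mul_const c)).ennreal_ofReal
  have hB_meas : Measurable fun y => ENNReal.ofReal (c * phi (h y)) :=
    ((measurable_phi.comp hmeas).const_mul c).ennreal_ofReal
  have hh_lint : ∫⁻ y, ENNReal.ofReal (h y) * ENNReal.ofReal (c * |Real.log c|) ∂ν
      = ENNReal.ofReal (c * |Real.log c|) := by
    rw [lintegral_mul_const _ hmeas.ennreal_ofReal, hint1, one_mul]
  rcases le_or_gt 1 c with hc1 | hc1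
  · -- c ≥ 1 : log c ≥ 0
    have hlog : 0 ≤ Real.log c := Real.log_nonneg hc1
    have key : ∀ y, phi (h y * c) + (c - 1) = c * phi (h y) + h y * (c * Real.log c) := by
      intro y; rw [hmul y]; ring
    have e1 : ∫⁻ y, (ENNReal.ofReal (phi (h y * c)) + ENNReal.ofReal (c - 1)) ∂ν
        = ∫⁻ y, (ENNReal.ofReal (c * phi (h y))
            + ENNReal.ofReal (h y) * ENNReal.ofReal (c * Real.log c)) ∂ν := by
      refine lintegral_congr fun y => ?_
      rw [← ENNReal.ofReal_mul (hnn y),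
        ← ENNReal.ofReal_add (phi_nonneg (mul_nonneg (hnn y) hc)) (by linarith),
        ← ENNReal.ofReal_add (mul_nonneg hc (phi_nonneg (hnn y)))
          (mul_nonneg (hnn y) (mul_nonneg hc hlog)), key y]
    rw [lintegral_add_right _ (measurable_const), lintegral_const] at e1
    rw [lintegral_add_right _ ((hmeas.ennreal_ofReal).mul_const _), ] at e1
    rw [lintegral_mul_const _ hmeas.ennreal_ofReal, hint1, one_mul] at e1
    have hsplit : ENNReal.ofReal (c * Real.log c)
        = ENNReal.ofReal (phi c) + ENNReal.ofReal (c - 1) := by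
      rw [← ENNReal.ofReal_add (phi_nonneg hc) (by linarith)]
      congr 1; simp only [phi]; ring
    rw [hsplit] at e1
    simp only [measure_univ, mul_one] at e1
    have hfin : ENNReal.ofReal (c - 1) ≠ ⊤ := ENNReal.ofReal_ne_top
    refine (ENNReal.add_left_inj hfin).mp ?_
    rw [e1]; ring
  · -- 0 < c < 1 : log c < 0
    have hlog : Real.log c ≤ 0 := Real.log_nonpos hc hc1.le
    have key : ∀ y, phi (h y * c) + h y * (c * (-Real.log c)) = c * phi (h y) + (1 - c) := by
      intro y; rw [hmul y]; ring
    have e1 : ∫⁻ y, (ENNReal.ofReal (phi (h y * c))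
          + ENNReal.ofReal (h y) * ENNReal.ofReal (c * (-Real.log c))) ∂ν
        = ∫⁻ y, (ENNReal.ofReal (c * phi (h y)) + ENNReal.ofReal (1 - c)) ∂ν := by
      refine lintegral_congr fun y => ?_
      rw [← ENNReal.ofReal_mul (hnn y),
        ← ENNReal.ofReal_add (phi_nonneg (mul_nonneg (hnn y) hc))
          (mul_nonneg (hnn y) (mul_nonneg hc (neg_nonneg.mpr hlog))),
        ← ENNReal.ofReal_add (mul_nonneg hc (phi_nonneg (hnn y))) (by linarith), key y]
    rw [lintegral_add_right _ ((hmeas.ennreal_ofReal).mul_const _)] at e1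
    rw [lintegral_mul_const _ hmeas.ennreal_ofReal, hint1, one_mul] at e1
    rw [lintegral_add_right _ measurable_const, lintegral_const] at e1
    have hsplit : ENNReal.ofReal (1 - c)
        = ENNReal.ofReal (phi c) + ENNReal.ofReal (c * (-Real.log c)) := by
      rw [← ENNReal.ofReal_add (phi_nonneg hc) (by nlinarith)]
      congr 1; simp only [phi]; ring
    rw [hsplit] at e1
    simp only [measure_univ, mul_one] at e1
    have hfin : ENNReal.ofReal (c * (-Real.log c)) ≠ ⊤ := ENNReal.ofReal_ne_top
    refine (ENNReal.add_left_inj hfin).mp ?_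
    rw [e1]; ring

lemma klDiv_of_not_ac {α : Type*} [MeasurableSpace α] {p q : Measure α} (h : ¬ p ≪ q) :
    klDiv p q = ⊤ := by rw [klDiv, if_neg (fun hh => h hh.1)]

lemma lintegral_eq_top_of_forall_top {α : Type*} [MeasurableSpace α] {ν : Measure α}
    {F : α → ℝ≥0∞} {s : Set α} (hs : MeasurableSet s) (hνs : ν s ≠ 0)
    (h : ∀ y ∈ s, F y = ⊤) : ∫⁻ y, F y ∂ν = ⊤ := by
  have : s.indicator (fun _ => (⊤ : ℝ≥0∞)) ≤ F := by
    intro y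
    by_cases hy : y ∈ s
    · simp [Set.indicator_of_mem hy, h y hy]
    · simp [Set.indicator_of_notMem hy]
  refine top_le_iff.mp ?_
  calc (⊤ : ℝ≥0∞) = ⊤ * ν s := (ENNReal.top_mul hνs).symm
    _ = ∫⁻ y, s.indicator (fun _ => (⊤ : ℝ≥0∞)) y ∂ν := by
        rw [lintegral_indicator hs, setLIntegral_const, mul_comm]
    _ ≤ ∫⁻ y, F y ∂ν := lintegral_mono this

/-- If `p ≪ ξ` and `p` gives no mass to `{dμ/dξ = 0}`, then `p ≪ μ`. -/
lemma ac_of_ac_of_zero_set {α : Type*} [MeasurableSpace α] {μ ξ p : Measure α}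
    [IsFiniteMeasure μ] [SigmaFinite ξ]
    (hμξ : μ ≪ ξ) (hpξ : p ≪ ξ) (h0 : p {x | μ.rnDeriv ξ x = 0} = 0) : p ≪ μ := by
  intro s hs
  obtain ⟨B, hsB, hB, hμB⟩ := exists_measurable_superset_of_null hs
  refine measure_mono_null hsB ?_
  have hint : ∫⁻ x in B, μ.rnDeriv ξ x ∂ξ = 0 := by
    rw [Measure.setLIntegral_rnDeriv hμξ]; exact hμB
  have hae : ∀ᵐ x ∂ξ, x ∈ B → μ.rnDeriv ξ x = 0 := by
    rw [← ae_restrict_iff' hB]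
    exact (lintegral_eq_zero_iff (Measure.measurable_rnDeriv μ ξ)).mp hint
  have hsplit : B ⊆ {x | μ.rnDeriv ξ x = 0} ∪ (B ∩ {x | μ.rnDeriv ξ x ≠ 0}) := by
    intro x hx
    by_cases hgx : μ.rnDeriv ξ x = 0
    · exact Or.inl hgx
    · exact Or.inr ⟨hx, hgx⟩
  refine measure_mono_null hsplit (le_antisymm ?_ zero_le)
  refine le_trans (measure_union_le _ _) ?_
  rw [h0, zero_add]
  have hξ0 : ξ (B ∩ {x | μ.rnDeriv ξ x ≠ 0}) = 0 := by
    refine measure_mono_null ?_ (ae_iff.mp hae)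
    intro x hx
    simp only [Set.mem_setOf_eq, Classical.not_imp]
    exact ⟨hx.1, hx.2⟩
  rw [hpξ hξ0]

lemma mul_rnDeriv_ae_eq {α : Type*} [MeasurableSpace α] {μ ξ : Measure α}
    [IsFiniteMeasure μ] [SigmaFinite ξ] (hμξ : μ ≪ ξ)
    {f₁ f₂ : α → ℝ≥0∞} (h : f₁ =ᵐ[μ] f₂) :
    (fun x => f₁ x * μ.rnDeriv ξ x) =ᵐ[ξ] (fun x => f₂ x * μ.rnDeriv ξ x) := by
  obtain ⟨N, hN_sub, hN, hμN⟩ := exists_measurable_superset_of_null (ae_iff.mp h)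
  have hint : ∫⁻ x in N, μ.rnDeriv ξ x ∂ξ = 0 := by
    rw [Measure.setLIntegral_rnDeriv hμξ]; exact hμN
  have hae : ∀ᵐ x ∂ξ, x ∈ N → μ.rnDeriv ξ x = 0 := by
    rw [← ae_restrict_iff' hN]
    exact (lintegral_eq_zero_iff (Measure.measurable_rnDeriv μ ξ)).mp hint
  filter_upwards [hae] with x hx
  by_cases hxN : x ∈ N
  · rw [hx hxN, mul_zero, mul_zero]
  · have : f₁ x = f₂ x := by
      by_contra hne
      exact hxN (hN_sub hne)
    rw [this]

/-- One-experiment decomposition: the expected KL divergence from a fixed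
reference `ξ` to the posterior equals the expected information gain plus the
KL divergence from the reference to the prior. -/
theorem expected_klDiv_to_reference_decomposition
    {Ω Θ 𝒴 : Type*} [MeasurableSpace Ω] [MeasurableSpace Θ] [MeasurableSpace 𝒴]
    [StandardBorelSpace Θ] [Nonempty Θ] [StandardBorelSpace 𝒴] [Nonempty 𝒴]
    (P : Measure Ω) [IsProbabilityMeasure P]
    (θ : Ω → Θ) (hθ : Measurable θ)
    (Y : Ω → 𝒴) (hY : Measurable Y)
    -- `π` is a regular conditional distribution of `θ` given `Y`:
    -- a Markov kernel disintegrating the joint law of `(Y, θ)`.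
    (π : Kernel 𝒴 Θ) [IsMarkovKernel π]
    (hπ : P.map (fun ω => (Y ω, θ ω)) = (P.map Y) ⊗ₘ π)
    (ξ : Measure Θ) [IsProbabilityMeasure ξ] :
    ∫⁻ y, klDiv (π y) ξ ∂(P.map Y)
      = ∫⁻ y, klDiv (π y) (P.map θ) ∂(P.map Y) + klDiv (P.map θ) ξ := by
  set ν := P.map Y with hν_def
  set μ := P.map θ with hμ_def
  haveI : IsProbabilityMeasure ν := Measure.isProbabilityMeasure_map hY.aemeasurable
  haveI : IsProbabilityMeasure μ := Measure.isProbabilityMeasure_map hθ.aemeasurable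
  have hpair : Measurable fun ω => (Y ω, θ ω) := hY.prodMk hθ
  have hbind : ∀ B : Set Θ, MeasurableSet B → μ B = ∫⁻ y, π y B ∂ν := by
    intro B hB
    have h1 : μ B = P.map (fun ω => (Y ω, θ ω)) (Set.univ ×ˢ B) := by
      rw [Measure.map_apply hθ hB, Measure.map_apply hpair (MeasurableSet.univ.prod hB)]
      congr 1
      ext ω; simp
    rw [h1, hπ, Measure.compProd_apply (MeasurableSet.univ.prod hB)]
    refine lintegral_congr fun y => ?_
    congr 1
    ext x; simp
  by_cases hμξ : μ ≪ ξ
  swap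
  · -- Case A : `μ` is not absolutely continuous w.r.t. `ξ`; both sides are `⊤`
    rw [klDiv_of_not_ac hμξ, add_top]
    obtain ⟨s, hsξ, hsμ⟩ : ∃ s, ξ s = 0 ∧ μ s ≠ 0 := by
      by_contra hcon
      push_neg at hcon
      exact hμξ fun s hs => hcon s hs
    obtain ⟨B, hsB, hB, hξB⟩ := exists_measurable_superset_of_null hsξ
    have hμB : μ B ≠ 0 := fun h => hsμ (measure_mono_null hsB h)
    have hT_meas : MeasurableSet {y | π y B ≠ 0} :=
      (Kernel.measurable_coe π hB) ((measurableSet_singleton (0 : ℝ≥0∞)).compl)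
    have hνT : ν {y | π y B ≠ 0} ≠ 0 := by
      intro hT0
      apply hμB
      rw [hbind B hB]
      rw [lintegral_eq_zero_iff (Kernel.measurable_coe π hB)]
      exact hT0
    refine lintegral_eq_top_of_forall_top hT_meas hνT fun y hy => ?_
    refine klDiv_of_not_ac fun hac => hy ?_
    simp only [Set.mem_setOf_eq] at hy ⊢
    exact hac hξB
  by_cases hae : ∀ᵐ y ∂ν, π y ≪ ξ
  swap
  · -- Case B-not : on a positive measure set `π y` is not a.c. w.r.t. `ξ`; both sides `⊤`
    have hS_meas : MeasurableSet {y | π y ≪ ξ} := by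
      have := Kernel.measurableSet_absolutelyContinuous π (Kernel.const 𝒴 ξ)
      simpa [Kernel.const_apply] using this
    have hνS : ν {y | π y ≪ ξ}ᶜ ≠ 0 := by
      intro h0
      exact hae (ae_iff.mpr h0)
    have hL : ∫⁻ y, klDiv (π y) ξ ∂ν = ⊤ :=
      lintegral_eq_top_of_forall_top hS_meas.compl hνS fun y hy =>
        klDiv_of_not_ac (by simpa using hy)
    have hR : ∫⁻ y, klDiv (π y) μ ∂ν = ⊤ :=
      lintegral_eq_top_of_forall_top hS_meas.compl hνS fun y hy =>
        klDiv_of_not_ac (fun hac => (by simpa using hy : ¬ π y ≪ ξ) (hac.trans hμξ))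
    rw [hL, hR, top_add]
  -- Main case
  set g : Θ → ℝ≥0∞ := μ.rnDeriv ξ with hg_def
  have hg_meas : Measurable g := Measure.measurable_rnDeriv μ ξ
  set G : 𝒴 → Θ → ℝ≥0∞ := fun y x => Kernel.rnDeriv π (Kernel.const 𝒴 μ) y x with hG_def
  have hG_meas : Measurable fun p : 𝒴 × Θ => G p.1 p.2 := Kernel.measurable_rnDeriv _ _
  have hG : ∀ y, G y =ᵐ[μ] (π y).rnDeriv μ := by
    intro y
    have := Kernel.rnDeriv_eq_rnDeriv_measure (κ := π) (η := Kernel.const 𝒴 μ) (a := y)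
    simpa [Kernel.const_apply] using this
  have hZ : MeasurableSet {x | g x = 0} := hg_meas (measurableSet_singleton 0)
  have hμZ : μ {x | g x = 0} = 0 := by
    rw [← Measure.setLIntegral_rnDeriv hμξ]
    rw [setLIntegral_congr_fun hZ (show Set.EqOn g (fun _ => 0) {x | g x = 0} from fun x hx => hx)]
    simp
  have h0 : ∀ᵐ y ∂ν, π y {x | g x = 0} = 0 := by
    have hz := (lintegral_eq_zero_iff (Kernel.measurable_coe π hZ)).mp
      (by rw [← hbind _ hZ]; exact hμZ)
    filter_upwards [hz] with y hy
    simpa using hy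
  have hacμ : ∀ᵐ y ∂ν, π y ≪ μ := by
    filter_upwards [h0, hae] with y h1 h2
    exact ac_of_ac_of_zero_set hμξ h2 h1
  -- the marginal property : `∫⁻ y, G y x ∂ν = 1` for `μ`-a.e. `x`
  have hm_meas : Measurable fun x => ∫⁻ y, G y x ∂ν :=
    Measurable.lintegral_prod_left' hG_meas
  have hm : ∀ B : Set Θ, MeasurableSet B → ∫⁻ x in B, (∫⁻ y, G y x ∂ν) ∂μ = μ B := by
    intro B hB
    have hswapG : Measurable (Function.uncurry fun (x : Θ) (y : 𝒴) => G y x) :=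
      hG_meas.comp measurable_swap
    rw [lintegral_lintegral_swap hswapG.aemeasurable]
    rw [hbind B hB]
    refine lintegral_congr_ae ?_
    filter_upwards [hacμ] with y h2
    rw [lintegral_congr_ae (ae_restrict_of_ae (hG y))]
    exact Measure.setLIntegral_rnDeriv h2 B
  have hm1 : (fun x => ∫⁻ y, G y x ∂ν) =ᵐ[μ] fun _ => 1 := by
    refine ae_eq_of_forall_setLIntegral_eq_of_sigmaFinite hm_meas measurable_const
      fun s hs _ => ?_
    rw [hm s hs, setLIntegral_const, one_mul]
  have hμ_cond : ∀ᵐ x ∂μ, (∫⁻ y, G y x ∂ν = 1) ∧ (∀ᵐ y ∂ν, G y x ≠ ⊤) := by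
    filter_upwards [hm1] with x hx
    refine ⟨hx, ?_⟩
    have hmeas : Measurable fun y => G y x := hG_meas.comp measurable_prodMk_right
    have hne : ∫⁻ y, G y x ∂ν ≠ ⊤ := by rw [hx]; exact one_ne_top
    exact (ae_lt_top hmeas hne).mono fun y hy => hy.ne
  have hξ_cond : ∀ᵐ x ∂ξ, g x ≠ 0 →
      (∫⁻ y, G y x ∂ν = 1) ∧ (∀ᵐ y ∂ν, G y x ≠ ⊤) := by
    have hμ_eq : μ = ξ.withDensity g := (Measure.withDensity_rnDeriv_eq μ ξ hμξ).symm
    rw [hμ_eq] at hμ_cond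
    exact (ae_withDensity_iff hg_meas).mp hμ_cond
  have hgfin : ∀ᵐ x ∂ξ, g x < ⊤ := Measure.rnDeriv_lt_top μ ξ
  -- abbreviations for the integrands
  set A : 𝒴 → Θ → ℝ≥0∞ := fun y x => ENNReal.ofReal (phi ((G y x * g x).toReal)) with hA_def
  set B : 𝒴 → Θ → ℝ≥0∞ :=
    fun y x => ENNReal.ofReal ((g x).toReal * phi ((G y x).toReal)) with hB_def
  have hA_meas : Measurable fun p : 𝒴 × Θ => A p.1 p.2 := by
    exact (measurable_phi.comp
      ((hG_meas.mul (hg_meas.comp measurable_snd)).ennreal_toReal)).ennreal_ofReal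
  have hB_meas : Measurable fun p : 𝒴 × Θ => B p.1 p.2 := by
    exact ((hg_meas.comp measurable_snd).ennreal_toReal.mul
      (measurable_phi.comp hG_meas.ennreal_toReal)).ennreal_ofReal
  -- Step 1 : rewrite the LHS
  have step1 : ∫⁻ y, klDiv (π y) ξ ∂ν = ∫⁻ y, ∫⁻ x, A y x ∂ξ ∂ν := by
    refine lintegral_congr_ae ?_
    filter_upwards [hae, hacμ] with y h1 h2
    rw [klDiv_eq_lintegral _ _ h1]
    refine lintegral_congr_ae ?_
    have c1 : (fun x => (π y).rnDeriv μ x * g x) =ᵐ[ξ] (π y).rnDeriv ξ :=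
      Measure.rnDeriv_mul_rnDeriv h2
    have c2 : (fun x => G y x * g x) =ᵐ[ξ] (fun x => (π y).rnDeriv μ x * g x) :=
      mul_rnDeriv_ae_eq hμξ (hG y)
    filter_upwards [c1, c2] with x hx1 hx2
    rw [hA_def]
    simp only
    rw [hx2, hx1]
  -- Step 2 : swap the order of integration
  have step2 : ∫⁻ y, ∫⁻ x, A y x ∂ξ ∂ν = ∫⁻ x, ∫⁻ y, A y x ∂ν ∂ξ :=
    lintegral_lintegral_swap hA_meas.aemeasurable
  -- Step 3 : apply the scalar identity for a.e. `x`
  have step3 : ∀ᵐ x ∂ξ, ∫⁻ y, A y x ∂ν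
      = ∫⁻ y, B y x ∂ν + ENNReal.ofReal (phi ((g x).toReal)) := by
    filter_upwards [hgfin, hξ_cond] with x hx1 hx2
    have hGx_meas : Measurable fun y => (G y x).toReal :=
      (hG_meas.comp measurable_prodMk_right).ennreal_toReal
    have hAx : ∀ y, A y x = ENNReal.ofReal (phi ((G y x).toReal * (g x).toReal)) := by
      intro y
      rw [hA_def]; simp only [ENNReal.toReal_mul]
    have hBx : ∀ y, B y x = ENNReal.ofReal ((g x).toReal * phi ((G y x).toReal)) :=
      fun y => rfl
    simp_rw [hAx, hBx]
    refine star_lemma ν _ hGx_meas (fun y => ENNReal.toReal_nonneg) _ ENNReal.toReal_nonneg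
      fun hc => ?_
    have hgx0 : g x ≠ 0 := by
      intro h; exact hc (by simp [h])
    obtain ⟨hint1, hfin⟩ := hx2 hgx0
    rw [← hint1]
    refine lintegral_congr_ae ?_
    filter_upwards [hfin] with y hy
    exact ENNReal.ofReal_toReal hy
  -- Step 4 : integrate over `ξ`
  have hBint_meas : Measurable fun x => ∫⁻ y, B y x ∂ν :=
    Measurable.lintegral_prod_left' hB_meas
  have step4 : ∫⁻ x, ∫⁻ y, A y x ∂ν ∂ξ
      = (∫⁻ x, ∫⁻ y, B y x ∂ν ∂ξ) + ∫⁻ x, ENNReal.ofReal (phi ((g x).toReal)) ∂ξ := by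
    rw [← lintegral_add_left hBint_meas]
    exact lintegral_congr_ae step3
  -- Step 5 : the second term is `klDiv μ ξ`
  have step5 : ∫⁻ x, ENNReal.ofReal (phi ((g x).toReal)) ∂ξ = klDiv μ ξ :=
    (klDiv_eq_lintegral μ ξ hμξ).symm
  -- Step 6 : swap back
  have hswapB : Measurable (Function.uncurry fun (x : Θ) (y : 𝒴) => B y x) :=
    hB_meas.comp measurable_swap
  have step6 : ∫⁻ x, ∫⁻ y, B y x ∂ν ∂ξ = ∫⁻ y, ∫⁻ x, B y x ∂ξ ∂ν :=
    lintegral_lintegral_swap hswapB.aemeasurable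
  -- Step 7 : identify the first term
  have step7 : ∫⁻ y, ∫⁻ x, B y x ∂ξ ∂ν = ∫⁻ y, klDiv (π y) μ ∂ν := by
    refine lintegral_congr_ae ?_
    filter_upwards [hacμ] with y h2
    have e1 : ∫⁻ x, B y x ∂ξ
        = ∫⁻ x, g x * ENNReal.ofReal (phi ((G y x).toReal)) ∂ξ := by
      refine lintegral_congr_ae ?_
      filter_upwards [hgfin] with x hx
      rw [hB_def]
      simp only
      rw [ENNReal.ofReal_mul ENNReal.toReal_nonneg, ENNReal.ofReal_toReal hx.ne]
    have hmeasB2 : Measurable fun x => ENNReal.ofReal (phi ((G y x).toReal)) := by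
      have h1 : Measurable fun x => G y x := hG_meas.comp measurable_prodMk_left
      exact (measurable_phi.comp h1.ennreal_toReal).ennreal_ofReal
    have e2 : ∫⁻ x, g x * ENNReal.ofReal (phi ((G y x).toReal)) ∂ξ
        = ∫⁻ x, ENNReal.ofReal (phi ((G y x).toReal)) ∂μ :=
      lintegral_rnDeriv_mul hμξ hmeasB2.aemeasurable
    have e3 : ∫⁻ x, ENNReal.ofReal (phi ((G y x).toReal)) ∂μ
        = ∫⁻ x, ENNReal.ofReal (phi (((π y).rnDeriv μ x).toReal)) ∂μ := by
      refine lintegral_congr_ae ?_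
      filter_upwards [hG y] with x hx
      rw [hx]
    rw [e1, e2, e3, ← klDiv_eq_lintegral _ _ h2]
  rw [step1, step2, step4, step5, step6, step7]
end

section
/- Let (Ω, P) be a probability space, Θ and Y standard Borel spaces, N a positive integer, and let θ : Ω → Θ and Y_0, …, Y_{N−1} : Ω → Y be measurable. For 0 ≤ k ≤ N let π_k : Y^k → P(Θ) be a regular conditional distribution of θ given (Y_0, …, Y_{k−1}), with π_0 the law of θ. Then for every measurable set A ⊆ Θ and every 0 ≤ k < N, P-almost surely E[ π_{k+1}(Y_0,…,Y_k)(A) ∣ σ(Y_0,…,Y_{k−1}) ] = π_k(Y_0,…,Y_{k−1})(A). (The Bayesian posterior probabilities form a martingale with respect to the observation filtration: integrating the next-stage posterior over the next observation recovers the current posterior, the key marginalization step in the proof of the terminal–incremental equivalence theorem.) -/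
open MeasureTheory ProbabilityTheory

/-- The Bayesian posterior probabilities form a martingale with respect to the
observation filtration: integrating the next-stage posterior over the next
observation recovers the current posterior. -/
theorem posterior_probability_martingale
    {Ω Θ 𝒴 : Type*} [MeasurableSpace Ω] [MeasurableSpace Θ] [MeasurableSpace 𝒴]
    [StandardBorelSpace Θ] [Nonempty Θ] [StandardBorelSpace 𝒴] [Nonempty 𝒴]
    (P : Measure Ω) [IsProbabilityMeasure P]
    (N : ℕ) (hN : 0 < N)
    (θ : Ω → Θ) (hθ : Measurable θ)
    (Y : ℕ → Ω → 𝒴) (hY : ∀ i < N, Measurable (Y i))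
    -- `π k` is a regular conditional distribution of `θ` given `(Y 0, …, Y (k-1))`,
    -- i.e. a Markov kernel disintegrating the joint law of the history and `θ`.
    (π : (k : ℕ) → Kernel (Fin k → 𝒴) Θ)
    (hπMarkov : ∀ k ≤ N, IsMarkovKernel (π k))
    (hπ : ∀ k ≤ N,
      P.map (fun ω => ((fun i : Fin k => Y i ω), θ ω))
        = (P.map (fun ω (i : Fin k) => Y i ω)) ⊗ₘ (π k))
    -- `π 0` is the (unconditional) law of `θ`.
    (hπ0 : ∀ h : Fin 0 → 𝒴, π 0 h = P.map θ)
    (A : Set Θ) (hA : MeasurableSet A)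
    (k : ℕ) (hk : k < N) :
    P[(fun ω => (π (k + 1) (fun i : Fin (k + 1) => Y i ω) A).toReal) |
        MeasurableSpace.comap (fun ω (i : Fin k) => Y i ω) inferInstance]
      =ᵐ[P] fun ω => (π k (fun i : Fin k => Y i ω) A).toReal := by
  have hYk : ∀ m, m ≤ N → Measurable (fun ω (i : Fin m) => Y i ω) := fun m hm =>
    measurable_pi_lambda _ fun i => hY i (lt_of_lt_of_le i.2 hm)
  have hk' : k ≤ N := hk.le
  have hk1 : k + 1 ≤ N := hk
  -- Key disintegration identity.
  have key : ∀ m, (hm : m ≤ N) → ∀ B : Set (Fin m → 𝒴), MeasurableSet B →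
      ∫⁻ ω in (fun ω (i : Fin m) => Y i ω) ⁻¹' B, π m (fun i : Fin m => Y i ω) A ∂P
        = P ((fun ω (i : Fin m) => Y i ω) ⁻¹' B ∩ θ ⁻¹' A) := by
    intro m hm B hB
    have hmeasκ : Measurable (fun v => π m v A) := Kernel.measurable_coe _ hA
    haveI := hπMarkov m hm
    rw [← setLIntegral_map hB hmeasκ (hYk m hm), ← Measure.compProd_apply_prod hB hA,
      ← hπ m hm, Measure.map_apply ((hYk m hm).prod hθ) (hB.prod hA),
      Set.mk_preimage_prod]
  -- measurability of both posterior probability processes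
  have hmeasF : Measurable (fun ω => (π (k + 1) (fun i : Fin (k + 1) => Y i ω) A).toReal) :=
    ((Kernel.measurable_coe _ hA).comp (hYk (k + 1) hk1)).ennreal_toReal
  have hmeasG : Measurable (fun ω => (π k (fun i : Fin k => Y i ω) A).toReal) :=
    ((Kernel.measurable_coe _ hA).comp (hYk k hk')).ennreal_toReal
  haveI := hπMarkov (k + 1) hk1
  haveI := hπMarkov k hk'
  have hbound : ∀ (m) (hm : m ≤ N) (v : Fin m → 𝒴),
      ‖(π m v A).toReal‖ ≤ 1 := by
    intro m hm v
    haveI := hπMarkov m hm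
    rw [Real.norm_eq_abs, abs_of_nonneg ENNReal.toReal_nonneg]
    calc (π m v A).toReal ≤ (1 : ENNReal).toReal :=
          ENNReal.toReal_mono ENNReal.one_ne_top prob_le_one
      _ = 1 := ENNReal.toReal_one
  have hintF : Integrable (fun ω => (π (k + 1) (fun i : Fin (k + 1) => Y i ω) A).toReal) P :=
    Integrable.mono' (integrable_const 1) hmeasF.aestronglyMeasurable
      (Filter.Eventually.of_forall fun ω => hbound (k + 1) hk1 _)
  have hintG : Integrable (fun ω => (π k (fun i : Fin k => Y i ω) A).toReal) P :=
    Integrable.mono' (integrable_const 1) hmeasG.aestronglyMeasurable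
      (Filter.Eventually.of_forall fun ω => hbound k hk' _)
  have hm : MeasurableSpace.comap (fun ω (i : Fin k) => Y i ω) inferInstance ≤ _ :=
    (hYk k hk').comap_le
  refine (ae_eq_condExp_of_forall_setIntegral_eq hm hintF
    (fun s _ _ => hintG.integrableOn) ?_ ?_).symm
  · rintro s ⟨B, hB, rfl⟩ -
    -- the restriction map
    set r : (Fin (k + 1) → 𝒴) → (Fin k → 𝒴) := fun v i => v i.castSucc with hr
    have hrmeas : Measurable r := measurable_pi_lambda _ fun i => measurable_pi_apply _
    have hsets : (fun ω (i : Fin (k + 1)) => Y i ω) ⁻¹' (r ⁻¹' B)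
        = (fun ω (i : Fin k) => Y i ω) ⁻¹' B := by
      ext ω
      simp only [Set.mem_preimage, hr]
      constructor <;> intro h <;> convert h using 2 <;> simp [Fin.coe_castSucc]
    have h1 := key (k + 1) hk1 (r ⁻¹' B) (hrmeas hB)
    have h2 := key k hk' B hB
    rw [hsets] at h1
    have hconv : ∀ (m) (hm : m ≤ N) (s : Set Ω),
        ∫ ω in s, (π m (fun i : Fin m => Y i ω) A).toReal ∂P
          = (∫⁻ ω in s, π m (fun i : Fin m => Y i ω) A ∂P).toReal := by
      intro m hm s
      haveI := hπMarkov m hm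
      refine integral_toReal (((Kernel.measurable_coe _ hA).comp (hYk m hm)).aemeasurable) ?_
      exact Filter.Eventually.of_forall fun ω => lt_of_le_of_lt prob_le_one ENNReal.one_lt_top
    rw [hconv k hk', hconv (k + 1) hk1, h1, h2]
  · exact ⟨_, ((Kernel.measurable_coe (π k) hA).ennreal_toReal.comp
      (Measurable.of_comap_le le_rfl)).stronglyMeasurable, Filter.EventuallyEq.rfl⟩
end

section
/- Let (Ω, P) be a probability space, Θ and Y standard Borel spaces, N a positive integer, and θ : Ω → Θ, Y_0,…,Y_{N−1} : Ω → Y measurable. Fix 0 ≤ k < N. Let π_k : Y^k → P(Θ) be a regular conditional distribution of θ given (Y_0,…,Y_{k−1}), let L_k : Θ × Y^k → P(Y) be a regular conditional distribution of Y_k given (θ, Y_0,…,Y_{k−1}), and let η_k : Y^k → P(Y) be a regular conditional distribution of Y_k given (Y_0,…,Y_{k−1}). Then for almost every history y = (y_0,…,y_{k−1}) with respect to the law of (Y_0,…,Y_{k−1}), and for every measurable B ⊆ Y: η_k(y)(B) = ∫_Θ L_k(θ′, y)(B) dπ_k(y)(θ′). (Equivalence of the episode-fixed-parameter and posterior-resampled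 sampling schemes for generating Monte Carlo episodes: resampling the parameter from the current posterior at each stage leaves the predictive law of the next observation, and hence the law of the observation sequence, unchanged.) -/
open MeasureTheory ProbabilityTheory

/-- Equivalence of the episode-fixed-parameter and posterior-resampled sampling
schemes: for almost every history, the predictive law of the next observation
is the mixture of the likelihood kernel over the current posterior. -/
theorem predictive_law_eq_posterior_mixture_of_likelihood
    {Ω Θ 𝒴 : Type*} [MeasurableSpace Ω] [MeasurableSpace Θ] [MeasurableSpace 𝒴]
    [StandardBorelSpace Θ] [Nonempty Θ] [StandardBorelSpace 𝒴] [Nonempty 𝒴]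
    (P : Measure Ω) [IsProbabilityMeasure P]
    (N : ℕ)
    (θ : Ω → Θ) (hθ : Measurable θ)
    (Y : ℕ → Ω → 𝒴) (hY : ∀ i < N, Measurable (Y i))
    (k : ℕ) (hk : k < N)
    -- `π` is a regular conditional distribution of `θ` given `(Y 0, …, Y (k-1))`.
    (π : Kernel (Fin k → 𝒴) Θ) [IsMarkovKernel π]
    (hπ : P.map (fun ω => ((fun i : Fin k => Y i ω), θ ω))
        = (P.map (fun ω (i : Fin k) => Y i ω)) ⊗ₘ π)
    -- `L` is a regular conditional distribution of `Y k` given `(θ, Y 0, …, Y (k-1))`.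
    (L : Kernel (Θ × (Fin k → 𝒴)) 𝒴) [IsMarkovKernel L]
    (hL : P.map (fun ω => ((θ ω, fun i : Fin k => Y i ω), Y k ω))
        = (P.map (fun ω => (θ ω, fun i : Fin k => Y i ω))) ⊗ₘ L)
    -- `η` is a regular conditional distribution of `Y k` given `(Y 0, …, Y (k-1))`.
    (η : Kernel (Fin k → 𝒴) 𝒴) [IsMarkovKernel η]
    (hη : P.map (fun ω => ((fun i : Fin k => Y i ω), Y k ω))
        = (P.map (fun ω (i : Fin k) => Y i ω)) ⊗ₘ η) :
    ∀ᵐ y ∂(P.map (fun ω (i : Fin k) => Y i ω)),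
      ∀ B : Set 𝒴, MeasurableSet B →
        η y B = ∫⁻ θ', L (θ', y) B ∂(π y) := by
  classical
  have hYk : Measurable (Y k) := hY k hk
  have hvec : Measurable (fun ω (i : Fin k) => Y i ω) :=
    measurable_pi_lambda _ fun i => hY i (i.2.trans hk)
  set μ : Measure (Fin k → 𝒴) := P.map (fun ω (i : Fin k) => Y i ω) with hμ
  set ρ : Measure ((Fin k → 𝒴) × 𝒴) := P.map (fun ω => ((fun i : Fin k => Y i ω), Y k ω)) with hρ
  set L' : Kernel ((Fin k → 𝒴) × Θ) 𝒴 := L.comap Prod.swap measurable_swap with hL'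
  set κ : Kernel (Fin k → 𝒴) 𝒴 := Kernel.snd (π ⊗ₖ L') with hκ
  have hρfst : ρ.fst = μ := by
    rw [hρ, hμ, Measure.fst, Measure.map_map measurable_fst (hvec.prodMk hYk)]
    rfl
  -- second disintegration: ρ = μ ⊗ₘ κ
  have hρκ : ρ = μ ⊗ₘ κ := by
    ext s hs
    rw [Measure.compProd_apply hs]
    have hκapp : ∀ y, κ y (Prod.mk y ⁻¹' s)
        = ∫⁻ θ', L (θ', y) {c | (y, c) ∈ s} ∂(π y) := by
      intro y
      rw [hκ, Kernel.snd_apply' _ _ (measurable_prodMk_left hs),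
        Kernel.compProd_apply]
      · simp [hL', Kernel.comap_apply]
        rfl
      · exact measurable_snd (measurable_prodMk_left hs)
    simp_rw [hκapp]
    -- RHS computation via hL
    have hmap : ρ = (P.map (fun ω => ((θ ω, fun i : Fin k => Y i ω), Y k ω))).map
        (fun p => (p.1.2, p.2)) := by
      rw [hρ, Measure.map_map (by fun_prop) ((hθ.prodMk hvec).prodMk hYk)]
      rfl
    have hν : P.map (fun ω => (θ ω, fun i : Fin k => Y i ω))
        = (μ ⊗ₘ π).map Prod.swap := by
      rw [← hπ, Measure.map_map measurable_swap (hvec.prodMk hθ)]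
      rfl
    rw [hmap, hL, hν, Measure.map_apply (by fun_prop) hs,
      Measure.compProd_apply ((by fun_prop : Measurable fun p : ((Θ × (Fin k → 𝒴)) × 𝒴) => (p.1.2, p.2)) hs)]
    rw [MeasureTheory.lintegral_map ?_ measurable_swap]
    · rw [Measure.lintegral_compProd]
      · simp only [Prod.swap]
        rfl
      · exact (Kernel.measurable_kernel_prodMk_left
          ((measurable_fst.snd.prodMk measurable_snd) hs)).comp measurable_swap
    · exact Kernel.measurable_kernel_prodMk_left
        ((measurable_fst.snd.prodMk measurable_snd) hs)
  have h1 : ∀ᵐ y ∂μ, η y = ρ.condKernel y := by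
    rw [← hρfst]
    exact eq_condKernel_of_measure_eq_compProd η (by rw [hρfst, ← hη, hρ])
  have h2 : ∀ᵐ y ∂μ, κ y = ρ.condKernel y := by
    rw [← hρfst]
    exact eq_condKernel_of_measure_eq_compProd κ (by rw [hρfst, ← hρκ])
  filter_upwards [h1, h2] with y hy1 hy2 B hB
  rw [hy1, ← hy2, hκ, Kernel.snd_apply' _ _ hB,
    Kernel.compProd_apply (s := Prod.snd ⁻¹' B) (measurable_snd hB)]
  simp [hL', Kernel.comap_apply]
  rfl
end

section
/- Let X be a measurable space, E a real Banach space, and N a positive integer. Let P_k : X → P(X) be Markov kernels for k = 0,…,N−1, and let A_k : X → E be bounded strongly measurable functions for k = 0,…,N−1. Suppose G_k : X → E for k = 0,…,N are bounded strongly measurable functions satisfying G_N ≡ 0 and, for all 0 ≤ k < N and all x ∈ X, G_k(x) = A_k(x) + ∫_X G_{k+1}(x′) dP_k(x)(x′). Then for all 0 ≤ k ≤ N and all x ∈ X, G_k(x) = Σ_{l=k}^{N−1} ∫_X A_l(x′) d( (P_{l−1} ∘ ⋯ ∘ P_k)(x) )(x′), where for l = k the empty composition of kernels is interpreted as the Dirac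 measure δ_x, and P_{l−1} ∘ ⋯ ∘ P_k denotes sequential kernel composition (the law at stage l of the Markov chain started at x at stage k). (The unrolling of the recursive value-gradient relation into the summed policy-gradient expression, the key structural step in the proof of the policy gradient theorem.) -/
open MeasureTheory ProbabilityTheory

/-- The law at stage `k + j` of the Markov chain with transition kernels `P`
started at `x` at stage `k`: `chainLaw P k 0 x = δ_x` and
`chainLaw P k (j+1) x = (chainLaw P k j x).bind (P (k+j))`, i.e. the sequential
composition `P_{k+j-1} ∘ ⋯ ∘ P_k` applied to `x` (the Dirac measure for the
empty composition). -/
noncomputable def chainLaw {X : Type*} [MeasurableSpace X]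
    (P : ℕ → Kernel X X) (k : ℕ) : (j : ℕ) → X → Measure X
  | 0, x => Measure.dirac x
  | j + 1, x => (chainLaw P k j x).bind fun x' => P (k + j) x'

section Aux

variable {X E : Type*} [MeasurableSpace X]
  [NormedAddCommGroup E] [NormedSpace ℝ E] [CompleteSpace E]

noncomputable def chainKer (P : ℕ → Kernel X X) (k : ℕ) : ℕ → Kernel X X
  | 0 => Kernel.deterministic id measurable_id
  | j + 1 => (P (k + j)) ∘ₖ chainKer P k j

lemma chainLaw_eq_chainKer (P : ℕ → Kernel X X) (k j : ℕ) (x : X) :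
    chainLaw P k j x = chainKer P k j x := by
  induction j with
  | zero => simp [chainLaw, chainKer, Kernel.deterministic_apply]
  | succ j ih => rw [chainLaw, chainKer, Kernel.comp_apply, ih]

lemma chainKer_isMarkov (P : ℕ → Kernel X X) (k j : ℕ)
    (h : ∀ i < j, IsMarkovKernel (P (k + i))) : IsMarkovKernel (chainKer P k j) := by
  induction j with
  | zero => rw [chainKer]; infer_instance
  | succ j ih =>
    rw [chainKer]
    haveI := ih fun i hi => h i (Nat.lt_succ_of_lt hi)
    haveI := h j (Nat.lt_succ_self j)
    infer_instance

lemma chainLaw_measurable (P : ℕ → Kernel X X) (k j : ℕ) :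
    Measurable (chainLaw P k j) := by
  have : chainLaw P k j = fun x => chainKer P k j x := funext (chainLaw_eq_chainKer P k j)
  rw [this]; exact (chainKer P k j).measurable

lemma chainLaw_shift (P : ℕ → Kernel X X) (k j : ℕ) (x : X) :
    chainLaw P k (j + 1) x = (P k x).bind (chainLaw P (k + 1) j) := by
  induction j generalizing x with
  | zero =>
    rw [chainLaw, show chainLaw P k 0 x = Measure.dirac x from rfl]
    rw [Measure.dirac_bind (Kernel.measurable _)]
    have : chainLaw P (k + 1) 0 = Measure.dirac := rfl
    rw [this, Measure.bind_dirac, Nat.add_zero]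
  | succ j ih =>
    rw [chainLaw, ih, Measure.bind_bind (chainLaw_measurable P (k+1) j).aemeasurable (Kernel.measurable _).aemeasurable]
    congr 1
    funext y
    rw [show k + (j + 1) = (k + 1) + j by omega, ← chainLaw]

lemma integrable_of_bdd {μ : Measure X} [IsFiniteMeasure μ] {f : X → E}
    (hf : AEStronglyMeasurable f μ) {C : ℝ} (hC : ∀ x, ‖f x‖ ≤ C) : Integrable f μ :=
  Integrable.mono' (integrable_const C) hf (Filter.Eventually.of_forall hC)

lemma integral_kernel_comp (η κ : Kernel X X) [IsMarkovKernel η] [IsMarkovKernel κ]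
    {f : X → E} (hf : StronglyMeasurable f) {C : ℝ} (hC : ∀ x, ‖f x‖ ≤ C) (a : X) :
    ∫ z, f z ∂((η ∘ₖ κ) a) = ∫ b, ∫ z, f z ∂(η b) ∂(κ a) := by
  rw [Kernel.comp_eq_snd_compProd, Kernel.snd_apply,
    integral_map measurable_snd.aemeasurable hf.aestronglyMeasurable]
  have hint : Integrable (fun z : X × X => f z.2) ((κ ⊗ₖ Kernel.prodMkLeft X η) a) :=
    integrable_of_bdd (hf.comp_measurable measurable_snd).aestronglyMeasurable
      (C := C) (fun z => hC z.2)
  rw [ProbabilityTheory.integral_compProd hint]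
  simp [Kernel.prodMkLeft_apply]

lemma sm_integral_kernel (η : Kernel X X) [IsSFiniteKernel η] {f : X → E}
    (hf : StronglyMeasurable f) :
    StronglyMeasurable (fun x => ∫ z, f z ∂η x) :=
  StronglyMeasurable.integral_kernel_prod_right (κ := η) (f := fun _ z => f z)
    (hf.comp_measurable measurable_snd)

lemma bdd_integral_kernel (η : Kernel X X) [IsMarkovKernel η] {f : X → E}
    {C : ℝ} (hC : ∀ x, ‖f x‖ ≤ C) (x : X) : ‖∫ z, f z ∂η x‖ ≤ C := by
  calc ‖∫ z, f z ∂η x‖ ≤ C * ((η x) Set.univ).toReal :=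
        norm_integral_le_of_norm_le_const (Filter.Eventually.of_forall hC)
    _ = C := by simp

end Aux

/-- Unrolling of the recursive value relation into a summed expression: if
`G_N ≡ 0` and `G_k = A_k + ∫ G_{k+1} dP_k`, then
`G_k(x) = Σ_{l=k}^{N-1} ∫ A_l d((P_{l-1} ∘ ⋯ ∘ P_k)(x))`. -/
theorem value_recursion_unrolled
    {X E : Type*} [MeasurableSpace X]
    [NormedAddCommGroup E] [NormedSpace ℝ E] [CompleteSpace E]
    (N : ℕ) (hN : 0 < N)
    (P : ℕ → Kernel X X) (hP : ∀ k < N, IsMarkovKernel (P k))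
    (A : ℕ → X → E)
    (hA : ∀ k < N, StronglyMeasurable (A k))
    (hABdd : ∀ k < N, ∃ C, ∀ x, ‖A k x‖ ≤ C)
    (G : ℕ → X → E)
    (hG : ∀ k ≤ N, StronglyMeasurable (G k))
    (hGBdd : ∀ k ≤ N, ∃ C, ∀ x, ‖G k x‖ ≤ C)
    (hGN : ∀ x, G N x = 0)
    (hGrec : ∀ k < N, ∀ x, G k x = A k x + ∫ x', G (k + 1) x' ∂(P k x)) :
    ∀ k ≤ N, ∀ x, G k x
      = ∑ l ∈ Finset.Ico k N, ∫ x', A l x' ∂(chainLaw P k (l - k) x) := by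
  suffices h : ∀ d k, k + d = N → ∀ x,
      G k x = ∑ l ∈ Finset.Ico k N, ∫ x', A l x' ∂(chainLaw P k (l - k) x) by
    intro k hk x; exact h (N - k) k (by omega) x
  intro d
  induction d with
  | zero =>
    intro k hk x
    have hkN : k = N := by omega
    subst hkN
    simp [hGN x]
  | succ d ih =>
    intro k hk x
    have hkN : k < N := by omega
    rw [Finset.sum_eq_sum_Ico_succ_bot hkN]
    have h0 : ∫ x', A k x' ∂(chainLaw P k (k - k) x) = A k x := by
      simp only [Nat.sub_self]
      rw [show chainLaw P k 0 x = Measure.dirac x from rfl]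
      exact integral_dirac' _ _ (hA k hkN)
    rw [h0, hGrec k hkN x]
    congr 1
    haveI hPk := hP k hkN
    have hterm : ∀ l ∈ Finset.Ico (k+1) N,
        ∫ x', A l x' ∂(chainLaw P k (l - k) x)
          = ∫ y, (∫ z, A l z ∂(chainKer P (k+1) (l - (k+1)) y)) ∂(P k x) := by
      intro l hl
      rw [Finset.mem_Ico] at hl
      have hlk : l - k = (l - (k+1)) + 1 := by omega
      rw [hlk, chainLaw_shift]
      have heq : (P k x).bind (chainLaw P (k+1) (l-(k+1)))
          = ((chainKer P (k+1) (l-(k+1))) ∘ₖ (P k)) x := by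
        rw [Kernel.comp_apply]
        congr 1
        exact funext (chainLaw_eq_chainKer P (k+1) (l-(k+1)))
      rw [heq]
      haveI := chainKer_isMarkov P (k+1) (l-(k+1)) (fun i hi => hP _ (by omega))
      obtain ⟨C, hC⟩ := hABdd l hl.2
      exact integral_kernel_comp _ _ (hA l hl.2) hC x
    rw [Finset.sum_congr rfl hterm]
    have hGrw : G (k+1) = fun y => ∑ l ∈ Finset.Ico (k+1) N,
        ∫ z, A l z ∂(chainLaw P (k+1) (l - (k+1)) y) := by
      funext y
      exact ih (k+1) (by omega) y
    have hch : ∀ l y, (chainLaw P (k+1) (l - (k+1)) y : Measure X)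
        = chainKer P (k+1) (l - (k+1)) y := fun l y => chainLaw_eq_chainKer _ _ _ _
    rw [hGrw]
    simp_rw [hch]
    rw [integral_finset_sum]
    intro l hl
    rw [Finset.mem_Ico] at hl
    haveI := chainKer_isMarkov P (k+1) (l-(k+1)) (fun i hi => hP _ (by omega))
    obtain ⟨C, hC⟩ := hABdd l hl.2
    exact integrable_of_bdd (sm_integral_kernel _ (hA l hl.2)).aestronglyMeasurable
      (bdd_integral_kernel _ hC)
end
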